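/- (Faulty own predecessor.) Let H be a hardware clock, let W be a nonempty finite index set with pulse times (t_w)_{w∈W} and reception times r_w ∈ [t_w + d − u, t_w + d], and set t_min := min_{w∈W} t_w, t_max := max_{w∈W} t_w, H_min := min_{w∈W} H(r_w), H_max := max_{w∈W} H(r_w). Let H_own be an arbitrary real (the faulty predecessor's message may arrive at any local time), let C be the algorithm correction computed from (H_own, H_min, H_max), and let t_pulse be the unique real with H(t_pulse) = H_own + Λ − d − C. Then t_min + Λ − 2κ ≤ t_pulse ≤ t_max + Λ + 2κ. -/

import Mathlib

/-- Lemma `fault_self`: the own predecessor is faulty, all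
neighbouring predecessors (indexed by the nonempty finite type `ι`) are correct. -/
theorem stmt14
    (ϑ u d Λ κ : ℝ)
    (hϑ : 1 < ϑ) (hu : 0 ≤ u) (hd : u ≤ d) (hΛ : d < Λ)
    (hκ : κ = 2 * (u + (1 - 1/ϑ) * (Λ - d)))
    (H : ℝ → ℝ)
    (hH : ∀ t t' : ℝ, t ≤ t' → t' - t ≤ H t' - H t ∧ H t' - H t ≤ ϑ * (t' - t))
    {ι : Type*} [Fintype ι] [Nonempty ι]
    (tw r : ι → ℝ)
    (hr : ∀ w : ι, tw w + d - u ≤ r w ∧ r w ≤ tw w + d)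
    (Hown : ℝ)
    (Hmin Hmax : ℝ)
    (hHmin : Hmin = ⨅ w : ι, H (r w)) (hHmax : Hmax = ⨆ w : ι, H (r w))
    (Δ : ℝ)
    (hΔ : IsLeast {x : ℝ | ∃ s : ℕ,
      x = max (Hown - Hmax + 4*(s:ℝ)*κ) (Hown - Hmin - 4*(s:ℝ)*κ)} (Δ + κ/2))
    (C : ℝ)
    (hC1 : 0 ≤ Δ → Δ ≤ ϑ*κ → C = Δ)
    (hC2 : Δ < 0 → C = min (Hown - Hmin + 3*κ/2) 0)
    (hC3 : ϑ*κ < Δ → C = max (Hown - Hmax - 3*κ/2) (ϑ*κ))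
    (tpulse : ℝ) (hpulse : H tpulse = Hown + Λ - d - C) :
    (⨅ w : ι, tw w) + Λ - 2*κ ≤ tpulse ∧ tpulse ≤ (⨆ w : ι, tw w) + Λ + 2*κ := by
  have hϑ0 : (0:ℝ) < ϑ := by linarith
  have h1ϑ : 0 < 1 - 1/ϑ := by
    have : 1/ϑ < 1 := by rw [div_lt_one hϑ0]; exact hϑ
    linarith
  have hκ0 : 0 < κ := by nlinarith [mul_pos h1ϑ (by linarith : (0:ℝ) < Λ - d)]
  have hϑκ : ϑ * κ = 2*ϑ*u + 2*(ϑ-1)*(Λ-d) := by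
    rw [hκ]; field_simp
  -- attainers of max / min
  obtain ⟨vmax, hvmax⟩ := Finite.exists_max (fun w => H (r w))
  obtain ⟨vmin, hvmin⟩ := Finite.exists_min (fun w => H (r w))
  have hbddA : BddAbove (Set.range fun w => H (r w)) := (Set.finite_range _).bddAbove
  have hbddB : BddBelow (Set.range fun w => H (r w)) := (Set.finite_range _).bddBelow
  have hHmax' : Hmax = H (r vmax) := by
    rw [hHmax]; exact le_antisymm (ciSup_le hvmax) (le_ciSup hbddA vmax)
  have hHmin' : Hmin = H (r vmin) := by
    rw [hHmin]; exact le_antisymm (ciInf_le hbddB vmin) (le_ciInf hvmin)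
  have hab : Hmin ≤ Hmax := by rw [hHmin', hHmax']; exact hvmax vmin
  -- facts about Δ
  obtain ⟨s, hs⟩ := hΔ.1
  have hge_a : Hown - Hmax ≤ Δ + κ/2 := by
    have hsnn : (0:ℝ) ≤ 4*(s:ℝ)*κ := by positivity
    have := le_max_left (Hown - Hmax + 4*(s:ℝ)*κ) (Hown - Hmin - 4*(s:ℝ)*κ)
    rw [← hs] at this
    linarith
  have hle_b : Δ + κ/2 ≤ Hown - Hmin := by
    refine hΔ.2 ⟨0, ?_⟩
    push_cast
    rw [max_eq_right (by linarith)]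
    ring
  -- core bounds on C
  have hCbounds : Hown - Hmax - C ≤ 3*κ/2 ∧ -(3*κ/2) ≤ Hown - Hmin - C := by
    rcases lt_trichotomy Δ 0 with h | h | h
    · rw [hC2 h]
      constructor
      · have h1 : Hown - Hmax - 3*κ/2 ≤ Hown - Hmin + 3*κ/2 := by linarith
        have h2 : Hown - Hmax - 3*κ/2 ≤ 0 := by linarith
        have := le_min h1 h2
        linarith
      · have := min_le_left (Hown - Hmin + 3*κ/2) (0:ℝ)
        linarith
    · rw [hC1 (le_of_eq h.symm) (by nlinarith)]
      constructor <;> linarith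
    · rcases le_or_gt Δ (ϑ*κ) with h2 | h2
      · rw [hC1 h.le h2]
        constructor <;> linarith
      · rw [hC3 h2]
        constructor
        · have := le_max_left (Hown - Hmax - 3*κ/2) (ϑ*κ)
          linarith
        · have h3 : Hown - Hmax - 3*κ/2 ≤ Hown - Hmin + 3*κ/2 := by linarith
          have h4 : ϑ*κ ≤ Hown - Hmin + 3*κ/2 := by linarith
          have := max_le h3 h4
          linarith
  obtain ⟨hCa, hCb⟩ := hCbounds
  -- key numeric inequalities
  have hkey1 : Λ - d + u - 2*κ ≤ Λ - d - 3*κ/2 := by nlinarith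
  have hkey2 : ϑ * (Λ - d + u - 2*κ) ≤ Λ - d - 3*κ/2 := by
    nlinarith [mul_nonneg (by linarith : (0:ℝ) ≤ ϑ - 1) hu,
      mul_nonneg (mul_nonneg (by linarith : (0:ℝ) ≤ ϑ - 1) (by linarith : (0:ℝ) ≤ ϑ - 1))
        (by linarith : (0:ℝ) ≤ Λ - d)]
  -- upper bound
  have hrmax := hr vmax
  have hrmin := hr vmin
  have hX : H tpulse - H (r vmax) ≤ Λ - d + 3*κ/2 := by
    rw [hpulse, ← hHmax']; linarith
  have hup : tpulse ≤ r vmax + (Λ - d + 3*κ/2) := by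
    rcases le_or_gt tpulse (r vmax) with h | h
    · linarith
    · have := (hH (r vmax) tpulse h.le).1
      linarith
  have htwmax : tw vmax ≤ ⨆ w, tw w := le_ciSup ((Set.finite_range _).bddAbove) vmax
  -- lower bound
  have hY : Λ - d - 3*κ/2 ≤ H tpulse - H (r vmin) := by
    rw [hpulse, ← hHmin']; linarith
  have hlow : r vmin + (Λ - d + u - 2*κ) ≤ tpulse := by
    rcases le_or_gt (r vmin) tpulse with h | h
    · have h2 := (hH (r vmin) tpulse h).2
      have h3 : ϑ * (Λ - d + u - 2*κ) ≤ ϑ * (tpulse - r vmin) := by linarith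
      have h4 := le_of_mul_le_mul_left h3 hϑ0
      linarith
    · have h1 := (hH tpulse (r vmin) h.le).1
      linarith
  have htwmin : (⨅ w, tw w) ≤ tw vmin := ciInf_le ((Set.finite_range _).bddBelow) vmin
  clear hΔ hH hr hs hC1 hC2 hC3 hHmin hHmax hpulse hX hY hvmax hvmin hbddA hbddB
    hHmax' hHmin' hCa hCb hkey1 hkey2 hge_a hle_b hab hϑκ
  constructor
  · linarith
  · linarith
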